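/- Let X be a nonnegative random variable with 0 < E[X²] < ∞ and X' a nonnegative independent random variable with size-bias relation as given. Then for all θ > 0, the Laplace transform identity E[e^{−θX^z}] = E[e^{−θX}] · ∫_0^∞ e^{−θx} P(X' ≥ x)/E[X'] dx holds, where X^z has the zero-biased distribution of X. -/

import Mathlib

open MeasureTheory ProbabilityTheory Real

noncomputable section

/-- `ν` is the size-biased distribution of `μ`: `E[V f(V)] = E[V] · E[f(V^s)]`
for all bounded measurable test functions `f`. -/
def IsSizeBiased (μ ν : Measure ℝ) : Prop :=
  ∀ f : ℝ → ℝ, Measurable f → (∀ x, |f x| ≤ 1) →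
    ∫ x, x * f x ∂μ = (∫ x, x ∂μ) * ∫ x, f x ∂ν

/-- `ν` is the zero-biased distribution of `μ`: `E[(W−μ) f(W)] = σ² · E[f'(W^z)]`
for all differentiable test functions `f` with bounded derivative. -/
def IsZeroBiased (μ ν : Measure ℝ) : Prop :=
  ∀ f : ℝ → ℝ, Differentiable ℝ f → (∀ x, |deriv f x| ≤ 1) →
    ∫ x, (x - ∫ y, y ∂μ) * f x ∂μ
      = (∫ x, (x - ∫ y, y ∂μ) ^ 2 ∂μ) * ∫ x, deriv f x ∂ν

open intervalIntegral in
lemma expInt (θ : ℝ) (hθ : 0 < θ) :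
    ∀ x : ℝ, ∫ t in (0:ℝ)..x, rexp (-(θ * t)) = (1 - rexp (-(θ * x)))/θ := by
  intro x
  have h1 : ∀ t:ℝ, rexp (-(θ*t)) = rexp ((-θ) * t) := fun t => by ring_nf
  simp_rw [h1]
  rw [integral_comp_mul_left Real.exp (by linarith : (-θ) ≠ 0), integral_exp]
  have hne : θ ≠ 0 := ne_of_gt hθ
  simp only [mul_zero, Real.exp_zero, smul_eq_mul, neg_mul]
  rw [inv_neg]
  ring

set_option maxHeartbeats 1000000 in
/-- Laplace transform identity: if `X^s =_d X + X'` with `X'` independent of `X`, then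
`E[e^{−θ X^z}] = E[e^{−θX}] ∫_0^∞ e^{−θx} P(X' ≥ x)/E[X'] dx` for all `θ > 0`. -/
theorem laplace_zeroBiased (μ μ' ν : Measure ℝ)
    [IsProbabilityMeasure μ] [IsProbabilityMeasure μ'] [IsProbabilityMeasure ν]
    (hμ0 : μ (Set.Iio 0) = 0) (hμ'0 : μ' (Set.Iio 0) = 0)
    (hL2 : MemLp id 2 μ) (hvar : 0 < ∫ x, (x - ∫ y, y ∂μ) ^ 2 ∂μ)
    (hμ'int : Integrable id μ') (hμ'mean : 0 < ∫ x, x ∂μ')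
    (hsb : IsSizeBiased μ (Measure.conv μ μ')) (hzb : IsZeroBiased μ ν) :
    ∀ θ : ℝ, 0 < θ →
      ∫ x, Real.exp (-(θ * x)) ∂ν
        = (∫ x, Real.exp (-(θ * x)) ∂μ)
            * ∫ x in Set.Ioi (0 : ℝ),
                Real.exp (-(θ * x)) * ((μ' (Set.Ici x)).toReal / ∫ y, y ∂μ') := by
  intro θ hθ
  have hθne : θ ≠ 0 := ne_of_gt hθ
  have hμae : ∀ᵐ x ∂μ, 0 ≤ x := by
    rw [ae_iff]; convert hμ0 using 2; ext x; simp [not_le]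
  have hμ'ae : ∀ᵐ x ∂μ', 0 ≤ x := by
    rw [ae_iff]; convert hμ'0 using 2; ext x; simp [not_le]
  set m := ∫ y, y ∂μ with hm
  set σ2 := ∫ x, (x - m) ^ 2 ∂μ with hσ2def
  set m' := ∫ y, y ∂μ' with hm'
  have hμint : Integrable (fun x : ℝ => x) μ := hL2.integrable one_le_two
  have hμ2int : Integrable (fun x : ℝ => x ^ 2) μ := by
    simpa using hL2.integrable_sq
  -- zero-bias identity for continuous test derivatives
  have key_zb : ∀ g : ℝ → ℝ, Continuous g → (∀ x, |g x| ≤ 1) →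
      ∫ x, (x - m) * (∫ t in (0:ℝ)..x, g t) ∂μ = σ2 * ∫ x, g x ∂ν := by
    intro g hg hb
    have hdiff : Differentiable ℝ (fun x => ∫ t in (0:ℝ)..x, g t) :=
      fun x => (hg.integral_hasStrictDerivAt 0 x).hasDerivAt.differentiableAt
    have hderiv : deriv (fun x => ∫ t in (0:ℝ)..x, g t) = g :=
      funext fun x => Continuous.deriv_integral g hg 0 x
    have h := hzb _ hdiff (by rw [hderiv]; exact hb)
    rw [hderiv] at h
    exact h
  -- ν is supported on [0, ∞)
  have hνkey : ∀ ε : ℝ, 0 < ε → ν (Set.Iic (-ε)) = 0 := by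
    intro ε hε
    set g : ℝ → ℝ := fun x => min 1 (max 0 (-x / ε)) with hgdef
    have hgc : Continuous g := by fun_prop
    have hg0 : ∀ x, 0 ≤ g x := fun x => le_min zero_le_one (le_max_left _ _)
    have hb : ∀ x, |g x| ≤ 1 := fun x => by
      rw [abs_of_nonneg (hg0 x)]; exact min_le_left _ _
    have h1 := key_zb g hgc hb
    have hF0 : ∀ x : ℝ, 0 ≤ x → (∫ t in (0:ℝ)..x, g t) = 0 := by
      intro x hx
      have hEq : Set.EqOn g (fun _ => (0:ℝ)) (Set.uIcc 0 x) := by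
        intro t ht
        rw [Set.uIcc_of_le hx] at ht
        have ht0 : 0 ≤ t := ht.1
        have hle : -t / ε ≤ 0 := div_nonpos_of_nonpos_of_nonneg (by linarith) hε.le
        simp [hgdef, max_eq_left hle]
      rw [intervalIntegral.integral_congr hEq]
      simp
    have hLHS : ∫ x, (x - m) * (∫ t in (0:ℝ)..x, g t) ∂μ = 0 := by
      have h2 : (fun x => (x - m) * (∫ t in (0:ℝ)..x, g t)) =ᵐ[μ] fun _ => 0 :=
        hμae.mono fun x hx => by simp [hF0 x hx]
      rw [integral_congr_ae h2, integral_zero]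
    have hint0 : ∫ x, g x ∂ν = 0 := by
      rw [hLHS] at h1
      rcases mul_eq_zero.1 h1.symm with h | h
      · exact absurd h (ne_of_gt hvar)
      · exact h
    have hgint : Integrable g ν :=
      Integrable.mono' (integrable_const 1) hgc.aestronglyMeasurable
        (Filter.Eventually.of_forall fun x => by rw [Real.norm_eq_abs]; exact hb x)
    have hmono : ∀ x, Set.indicator (Set.Iic (-ε)) (fun _ => (1:ℝ)) x ≤ g x := by
      intro x
      by_cases hx : x ∈ Set.Iic (-ε)
      · rw [Set.indicator_of_mem hx]
        have hx' : x ≤ -ε := hx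
        have h2 : (1:ℝ) ≤ -x / ε := (le_div_iff₀ hε).2 (by linarith)
        exact le_min le_rfl (le_max_of_le_right h2)
      · rw [Set.indicator_of_notMem hx]; exact hg0 x
    have hind : Integrable (Set.indicator (Set.Iic (-ε)) (fun _ => (1:ℝ))) ν :=
      (integrable_const 1).indicator measurableSet_Iic
    have hle := integral_mono hind hgint hmono
    rw [integral_indicator_const _ measurableSet_Iic, hint0, smul_eq_mul, mul_one] at hle
    have h0 : (ν (Set.Iic (-ε))).toReal = 0 := le_antisymm hle ENNReal.toReal_nonneg
    exact ((ENNReal.toReal_eq_zero_iff _).1 h0).resolve_right (measure_ne_top ν _)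
  have hνae : ∀ᵐ x ∂ν, 0 ≤ x := by
    rw [ae_iff]
    have hsub : {x : ℝ | ¬ 0 ≤ x} ⊆ ⋃ n : ℕ, Set.Iic (-(1/(n+1) : ℝ)) := by
      intro x hx
      simp only [Set.mem_setOf_eq, not_le] at hx
      obtain ⟨n, hn⟩ := exists_nat_one_div_lt (by linarith : (0:ℝ) < -x)
      exact Set.mem_iUnion.2 ⟨n, by simp only [Set.mem_Iic]; push_cast at hn ⊢; linarith⟩
    exact measure_mono_null hsub (measure_iUnion_null fun n => hνkey _ (by positivity))
  -- exponential test function facts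
  have hgb : ∀ x : ℝ, |rexp (-(θ * (max x 0)))| ≤ 1 := fun x => by
    rw [abs_of_pos (Real.exp_pos _)]
    exact Real.exp_le_one_iff.2 (neg_nonpos.2 (mul_nonneg hθ.le (le_max_right _ _)))
  -- ae on the product
  have hprodae : ∀ᵐ p ∂(μ.prod μ'), 0 ≤ p.1 ∧ 0 ≤ p.2 := by
    rw [ae_iff]
    have h1 : (μ.prod μ') (Set.Iio 0 ×ˢ (Set.univ : Set ℝ)) = 0 := by
      rw [Measure.prod_prod, hμ0, zero_mul]
    have h2 : (μ.prod μ') ((Set.univ : Set ℝ) ×ˢ Set.Iio 0) = 0 := by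
      rw [Measure.prod_prod, hμ'0, mul_zero]
    refine measure_mono_null ?_ (measure_union_null h1 h2)
    intro p hp
    simp only [Set.mem_setOf_eq, not_and_or, not_le] at hp
    rcases hp with h | h
    · exact Or.inl (Set.mem_prod.2 ⟨h, trivial⟩)
    · exact Or.inr (Set.mem_prod.2 ⟨trivial, h⟩)
  -- convolution value of the exponential test
  have hconv : ∫ x, Real.exp (-(θ * (max x 0))) ∂(Measure.conv μ μ')
      = (∫ x, Real.exp (-(θ * x)) ∂μ) * ∫ x, Real.exp (-(θ * x)) ∂μ' := by
    unfold Measure.conv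
    rw [integral_map (by fun_prop) (Continuous.aestronglyMeasurable (by fun_prop))]
    have h2 : (fun p : ℝ × ℝ => rexp (-(θ * (max (p.1 + p.2) 0))))
        =ᵐ[μ.prod μ'] fun p => rexp (-(θ * p.1)) * rexp (-(θ * p.2)) := by
      filter_upwards [hprodae] with p hp
      rw [max_eq_left (by linarith [hp.1, hp.2]), ← Real.exp_add]
      congr 1; ring
    rw [integral_congr_ae h2]
    exact integral_prod_mul (fun x : ℝ => rexp (-(θ * x))) (fun x : ℝ => rexp (-(θ * x)))
  -- size-bias applied to the exponential test
  have hX : ∫ x, x * Real.exp (-(θ * x)) ∂μ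
      = m * ((∫ x, Real.exp (-(θ * x)) ∂μ) * ∫ x, Real.exp (-(θ * x)) ∂μ') := by
    have h := hsb (fun x => rexp (-(θ * (max x 0)))) (by fun_prop) hgb
    rw [hconv] at h
    have h2 : (fun x : ℝ => x * rexp (-(θ * (max x 0)))) =ᵐ[μ]
        fun x => x * rexp (-(θ * x)) := by
      filter_upwards [hμae] with x hx
      rw [max_eq_left hx]
    rwa [integral_congr_ae h2] at h
  -- integrability helpers
  have hexpμ'int : Integrable (fun x : ℝ => rexp (-(θ * x))) μ' := by
    refine Integrable.mono' (integrable_const 1) (Continuous.aestronglyMeasurable (by fun_prop)) ?_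
    filter_upwards [hμ'ae] with x hx
    rw [Real.norm_eq_abs, abs_of_pos (Real.exp_pos _)]
    exact Real.exp_le_one_iff.2 (neg_nonpos.2 (mul_nonneg hθ.le hx))
  have hexpμint : Integrable (fun x : ℝ => rexp (-(θ * x))) μ := by
    refine Integrable.mono' (integrable_const 1) (Continuous.aestronglyMeasurable (by fun_prop)) ?_
    filter_upwards [hμae] with x hx
    rw [Real.norm_eq_abs, abs_of_pos (Real.exp_pos _)]
    exact Real.exp_le_one_iff.2 (neg_nonpos.2 (mul_nonneg hθ.le hx))
  have hsubint : Integrable (fun x : ℝ => x - m) μ := hμint.sub (integrable_const m)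
  have hsubexpint : Integrable (fun x : ℝ => (x - m) * rexp (-(θ * x))) μ := by
    refine Integrable.mono' hsubint.abs (Continuous.aestronglyMeasurable (by fun_prop)) ?_
    filter_upwards [hμae] with x hx
    rw [Real.norm_eq_abs, abs_mul, abs_of_pos (Real.exp_pos _)]
    calc |x - m| * rexp (-(θ * x)) ≤ |x - m| * 1 := by
          refine mul_le_mul_of_nonneg_left ?_ (abs_nonneg _)
          exact Real.exp_le_one_iff.2 (neg_nonpos.2 (mul_nonneg hθ.le hx))
      _ = |x - m| := mul_one _
  have hsubzero : ∫ x, (x - m) ∂μ = 0 := by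
    rw [integral_sub hμint (integrable_const m)]
    simp [hm]
  -- zero-bias applied to the exponential test
  have hZ : σ2 * ∫ x, Real.exp (-(θ * x)) ∂ν
      = (m / θ) * ((∫ x, Real.exp (-(θ * x)) ∂μ) * (1 - ∫ x, Real.exp (-(θ * x)) ∂μ')) := by
    have h := key_zb (fun x => rexp (-(θ * (max x 0)))) (by fun_prop) hgb
    have hνeq : ∫ x, rexp (-(θ * (max x 0))) ∂ν = ∫ x, rexp (-(θ * x)) ∂ν := by
      refine integral_congr_ae ?_
      filter_upwards [hνae] with x hx
      rw [max_eq_left hx]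
    rw [hνeq] at h
    have hFval : ∀ x : ℝ, 0 ≤ x →
        (∫ t in (0:ℝ)..x, rexp (-(θ * (max t 0)))) = (1 - rexp (-(θ * x)))/θ := by
      intro x hx
      have hEq : Set.EqOn (fun t : ℝ => rexp (-(θ * (max t 0))))
          (fun t => rexp (-(θ * t))) (Set.uIcc 0 x) := by
        intro t ht
        rw [Set.uIcc_of_le hx] at ht
        simp only
        rw [max_eq_left ht.1]
      rw [intervalIntegral.integral_congr hEq, expInt θ hθ]
    have hLHSeq : (fun x : ℝ => (x - m) * (∫ t in (0:ℝ)..x, rexp (-(θ * (max t 0)))))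
        =ᵐ[μ] fun x => ((x - m) - (x - m) * rexp (-(θ * x))) / θ := by
      filter_upwards [hμae] with x hx
      rw [hFval x hx]
      ring
    rw [integral_congr_ae hLHSeq, integral_div, integral_sub hsubint hsubexpint,
      hsubzero] at h
    have hexpand : ∫ x, (x - m) * rexp (-(θ * x)) ∂μ
        = ∫ x, x * rexp (-(θ * x)) ∂μ - m * ∫ x, rexp (-(θ * x)) ∂μ := by
      have heq : (fun x : ℝ => (x - m) * rexp (-(θ * x)))
          = fun x => x * rexp (-(θ * x)) - m * rexp (-(θ * x)) := by
        funext x; ring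
      have hxint : Integrable (fun x : ℝ => x * rexp (-(θ * x))) μ := by
        refine Integrable.mono' hμint.abs (Continuous.aestronglyMeasurable (by fun_prop)) ?_
        filter_upwards [hμae] with x hx
        rw [Real.norm_eq_abs, abs_mul, abs_of_pos (Real.exp_pos _)]
        calc |x| * rexp (-(θ * x)) ≤ |x| * 1 := by
              refine mul_le_mul_of_nonneg_left ?_ (abs_nonneg _)
              exact Real.exp_le_one_iff.2 (neg_nonpos.2 (mul_nonneg hθ.le hx))
          _ = |x| := mul_one _
      rw [heq, integral_sub hxint (hexpμint.const_mul m), integral_const_mul]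
    rw [hexpand, hX] at h
    rw [← h]
    ring
  -- integrability of id on the convolution and its mean
  have hfstint : Integrable (fun p : ℝ × ℝ => p.1) (μ.prod μ') := by
    have h1 : Integrable (fun x : ℝ => x) (Measure.map Prod.fst (μ.prod μ')) := by
      rw [Measure.map_fst_prod]
      simpa using hμint
    exact (integrable_map_measure aestronglyMeasurable_id measurable_fst.aemeasurable).1 h1
  have hsndint : Integrable (fun p : ℝ × ℝ => p.2) (μ.prod μ') := by
    have h1 : Integrable (fun x : ℝ => x) (Measure.map Prod.snd (μ.prod μ')) := by
      rw [Measure.map_snd_prod]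
      have h' : Integrable (fun x : ℝ => x) μ' := hμ'int
      simpa using h'
    exact (integrable_map_measure aestronglyMeasurable_id measurable_snd.aemeasurable).1 h1
  have haddint : Integrable (fun p : ℝ × ℝ => p.1 + p.2) (μ.prod μ') := hfstint.add hsndint
  have hconvInt : Integrable (fun x : ℝ => x) (Measure.conv μ μ') := by
    unfold Measure.conv
    exact (integrable_map_measure aestronglyMeasurable_id (by fun_prop)).2 haddint
  have e1 : ∫ p : ℝ × ℝ, p.1 ∂(μ.prod μ') = m := by
    have h := integral_map (μ := μ.prod μ') (φ := Prod.fst)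
      measurable_fst.aemeasurable (f := fun x : ℝ => x) aestronglyMeasurable_id
    rw [Measure.map_fst_prod] at h
    simp only [measure_univ, one_smul] at h
    exact h.symm
  have e2 : ∫ p : ℝ × ℝ, p.2 ∂(μ.prod μ') = m' := by
    have h := integral_map (μ := μ.prod μ') (φ := Prod.snd)
      measurable_snd.aemeasurable (f := fun x : ℝ => x) aestronglyMeasurable_id
    rw [Measure.map_snd_prod] at h
    simp only [measure_univ, one_smul] at h
    exact h.symm
  have hconvMean : ∫ x, x ∂(Measure.conv μ μ') = m + m' := by
    have h := integral_map (μ := μ.prod μ') (φ := fun p : ℝ × ℝ => p.1 + p.2)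
      (by fun_prop) (f := fun x : ℝ => x) aestronglyMeasurable_id
    unfold Measure.conv
    calc ∫ x, x ∂(Measure.map (fun p : ℝ × ℝ => p.1 + p.2) (μ.prod μ'))
        = ∫ p : ℝ × ℝ, p.1 + p.2 ∂(μ.prod μ') := h
      _ = m + m' := by rw [integral_add hfstint hsndint, e1, e2]
  -- σ² = m * m' via truncation
  have hσ2m : σ2 = m * m' := by
    set c : ℕ → ℝ → ℝ := fun n x => max (-((n:ℝ)+1)) (min x ((n:ℝ)+1)) with hc
    have hcabs : ∀ n x, |c n x| ≤ |x| := by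
      intro n x
      have hn : (0:ℝ) < (n:ℝ)+1 := by positivity
      rw [abs_le]
      constructor
      · exact le_max_of_le_right (le_min (neg_abs_le x) (by linarith [abs_nonneg x]))
      · exact max_le (by linarith [abs_nonneg x])
          (le_trans (min_le_left _ _) (le_abs_self x))
    have hcb : ∀ n x, |c n x| ≤ (n:ℝ)+1 := by
      intro n x
      have hn : (0:ℝ) < (n:ℝ)+1 := by positivity
      rw [abs_le]
      exact ⟨le_max_left _ _, max_le (by linarith) (min_le_right _ _)⟩
    have hcmeas : ∀ n, Measurable (c n) := by
      intro n; simp only [hc]; fun_prop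
    have hsbn : ∀ n : ℕ, ∫ x, x * c n x ∂μ = m * ∫ x, c n x ∂(Measure.conv μ μ') := by
      intro n
      have hn : (0:ℝ) < (n:ℝ)+1 := by positivity
      have hb : ∀ x, |c n x / ((n:ℝ)+1)| ≤ 1 := fun x => by
        rw [abs_div, abs_of_pos hn, div_le_one hn]
        exact hcb n x
      have h := hsb (fun x => c n x / ((n:ℝ)+1)) ((hcmeas n).div_const _) hb
      simp_rw [← mul_div_assoc] at h
      rw [integral_div, integral_div] at h
      field_simp at h
      linarith [h]
    have hlim1 : Filter.Tendsto (fun n => ∫ x, x * c n x ∂μ) Filter.atTop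
        (nhds (∫ x, x ^ 2 ∂μ)) := by
      refine tendsto_integral_of_dominated_convergence (fun x => x ^ 2)
        (fun n => (measurable_id.mul (hcmeas n)).aestronglyMeasurable) hμ2int
        (fun n => Filter.Eventually.of_forall fun x => ?_)
        (Filter.Eventually.of_forall fun x => ?_)
      · rw [Real.norm_eq_abs, abs_mul]
        calc |x| * |c n x| ≤ |x| * |x| :=
              mul_le_mul_of_nonneg_left (hcabs n x) (abs_nonneg x)
          _ = x ^ 2 := by rw [abs_mul_abs_self, sq]
      · have hev : ∀ᶠ n : ℕ in Filter.atTop, x * c n x = x ^ 2 := by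
          filter_upwards [Filter.eventually_ge_atTop ⌈|x|⌉₊] with n hn
          have hxn : |x| ≤ (n:ℝ)+1 := by
            calc |x| ≤ (⌈|x|⌉₊ : ℝ) := Nat.le_ceil _
              _ ≤ (n:ℝ) := by exact_mod_cast hn
              _ ≤ (n:ℝ)+1 := by linarith
          have h1 : c n x = x := by
            simp only [hc]
            rw [min_eq_left (abs_le.1 hxn).2, max_eq_right (abs_le.1 hxn).1]
          rw [h1, sq]
        exact Filter.Tendsto.congr' (hev.mono fun n h => h.symm) tendsto_const_nhds
    have hlim2 : Filter.Tendsto (fun n => ∫ x, c n x ∂(Measure.conv μ μ')) Filter.atTop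
        (nhds (∫ x, x ∂(Measure.conv μ μ'))) := by
      refine tendsto_integral_of_dominated_convergence (fun x => |x|)
        (fun n => (hcmeas n).aestronglyMeasurable) hconvInt.abs
        (fun n => Filter.Eventually.of_forall fun x => ?_)
        (Filter.Eventually.of_forall fun x => ?_)
      · rw [Real.norm_eq_abs]; exact hcabs n x
      · have hev : ∀ᶠ n : ℕ in Filter.atTop, c n x = x := by
          filter_upwards [Filter.eventually_ge_atTop ⌈|x|⌉₊] with n hn
          have hxn : |x| ≤ (n:ℝ)+1 := by
            calc |x| ≤ (⌈|x|⌉₊ : ℝ) := Nat.le_ceil _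
              _ ≤ (n:ℝ) := by exact_mod_cast hn
              _ ≤ (n:ℝ)+1 := by linarith
          simp only [hc]
          rw [min_eq_left (abs_le.1 hxn).2, max_eq_right (abs_le.1 hxn).1]
        exact Filter.Tendsto.congr' (hev.mono fun n h => h.symm) tendsto_const_nhds
    have hx2 : ∫ x, x ^ 2 ∂μ = m * (m + m') := by
      have h2 : Filter.Tendsto (fun n => ∫ x, x * c n x ∂μ) Filter.atTop
          (nhds (m * (m + m'))) := by
        rw [← hconvMean]
        exact (hlim2.const_mul m).congr fun n => (hsbn n).symm
      exact tendsto_nhds_unique hlim1 h2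
    have hσ2' : σ2 = ∫ x, x ^ 2 ∂μ - m ^ 2 := by
      rw [hσ2def]
      have hexp : (fun x : ℝ => (x - m) ^ 2) = fun x => (x ^ 2 - (2*m)*x) + m ^ 2 := by
        funext x; ring
      have i2 : Integrable (fun x : ℝ => (2*m)*x) μ := hμint.const_mul (2*m)
      have i1 : Integrable (fun x : ℝ => x ^ 2 - (2*m)*x) μ := hμ2int.sub i2
      rw [hexp, integral_add i1 (integrable_const _),
        integral_sub hμ2int i2, integral_const_mul, integral_const]
      simp only [measure_univ, ENNReal.toReal_one, smul_eq_mul, one_mul, probReal_univ, mul_one]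
      rw [← hm]
      ring
    rw [hσ2', hx2]
    ring
  have hmm' : 0 < m * m' := hσ2m ▸ hvar
  have hmpos : 0 < m := by
    rcases mul_pos_iff.1 hmm' with ⟨h, _⟩ | ⟨_, h⟩
    · exact h
    · linarith
  -- the layer-cake integral
  have hJ : ∫ x in Set.Ioi (0:ℝ), rexp (-(θ * x)) * (μ' (Set.Ici x)).toReal
      = (1 - ∫ x, rexp (-(θ * x)) ∂μ') / θ := by
    have hrep : ∀ x : ℝ, (μ' (Set.Ici x)).toReal
        = ∫ y, (if x ≤ y then (1:ℝ) else 0) ∂μ' := by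
      intro x
      have h1 : (fun y => if x ≤ y then (1:ℝ) else 0)
          = Set.indicator (Set.Ici x) (fun _ => (1:ℝ)) := by
        funext y; simp [Set.indicator_apply, Set.mem_Ici]
      rw [h1, integral_indicator_const _ measurableSet_Ici, smul_eq_mul, mul_one]; rfl
    have hintf : Integrable
        (Function.uncurry fun x y => rexp (-(θ * x)) * (if x ≤ y then (1:ℝ) else 0))
        ((volume.restrict (Set.Ioi 0)).prod μ') := by
      have hbase : Integrable (fun x : ℝ => rexp (-(θ * x)))
          (volume.restrict (Set.Ioi 0)) := by
        have h := exp_neg_integrableOn_Ioi 0 hθ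
        exact (by simpa [neg_mul] using h : IntegrableOn (fun x : ℝ => rexp (-(θ * x))) (Set.Ioi 0))
      refine Integrable.mono' (hbase.mul_prod (integrable_const (1:ℝ))) ?_ ?_
      · apply Measurable.aestronglyMeasurable
        apply Measurable.mul (by fun_prop)
        exact Measurable.ite (measurableSet_le measurable_fst measurable_snd)
          measurable_const measurable_const
      · refine Filter.Eventually.of_forall fun p => ?_
        simp only [Function.uncurry]
        rw [Real.norm_eq_abs, abs_mul, abs_of_pos (Real.exp_pos _)]
        split
        · simp
        · simp [le_of_lt (Real.exp_pos _)]
    calc ∫ x in Set.Ioi (0:ℝ), rexp (-(θ * x)) * (μ' (Set.Ici x)).toReal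
        = ∫ x in Set.Ioi (0:ℝ), (∫ y, rexp (-(θ * x)) * (if x ≤ y then (1:ℝ) else 0) ∂μ') := by
          refine integral_congr_ae (Filter.Eventually.of_forall fun x => ?_)
          show rexp (-(θ * x)) * (μ' (Set.Ici x)).toReal
            = ∫ y, rexp (-(θ * x)) * (if x ≤ y then (1:ℝ) else 0) ∂μ'
          rw [integral_const_mul, ← hrep]
      _ = ∫ y, (∫ x in Set.Ioi (0:ℝ), rexp (-(θ * x)) * (if x ≤ y then (1:ℝ) else 0)) ∂μ' :=
          integral_integral_swap (f := fun x y => rexp (-(θ * x)) * (if x ≤ y then (1:ℝ) else 0)) hintf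
      _ = ∫ y, (1 - rexp (-(θ * y))) / θ ∂μ' := by
          refine integral_congr_ae ?_
          filter_upwards [hμ'ae] with y hy
          have h1 : ∀ x : ℝ, rexp (-(θ * x)) * (if x ≤ y then (1:ℝ) else 0)
              = Set.indicator (Set.Iic y) (fun x => rexp (-(θ * x))) x := by
            intro x
            rw [Set.indicator_apply]
            by_cases h : x ≤ y <;> simp [h, Set.mem_Iic]
          simp_rw [h1]
          rw [integral_indicator measurableSet_Iic,
            Measure.restrict_restrict measurableSet_Iic]
          have h2 : Set.Iic y ∩ Set.Ioi 0 = Set.Ioc 0 y := by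
            ext t; simp [Set.mem_Ioc, and_comm]
          rw [h2, ← intervalIntegral.integral_of_le hy, expInt θ hθ]
      _ = (1 - ∫ x, rexp (-(θ * x)) ∂μ') / θ := by
          rw [integral_div, integral_sub (integrable_const 1) hexpμ'int, integral_const]
          simp
  -- assemble
  have hdiv : ∫ x in Set.Ioi (0:ℝ), rexp (-(θ * x)) * ((μ' (Set.Ici x)).toReal / m')
      = (∫ x in Set.Ioi (0:ℝ), rexp (-(θ * x)) * (μ' (Set.Ici x)).toReal) / m' := by
    simp_rw [div_eq_mul_inv, ← mul_assoc]
    exact integral_mul_const _ _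
  rw [hdiv, hJ]
  have hm'ne : m' ≠ 0 := ne_of_gt hμ'mean
  have hmne : m ≠ 0 := ne_of_gt hmpos
  rw [hσ2m] at hZ
  field_simp at hZ ⊢
  apply mul_left_cancel₀ hmne
  linear_combination m * hZ
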